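/- (1) Let p : ℝ^d → ℝ^t be a polynomial map with p(0) = 0 and W ⊆ T(ℝ^t). Then the set of paths X in ℝ^d such that the path t ↦ p(X_t − X₀) lies in 𝒱(W) equals 𝒱(M_p W), where M_p := Λ_{φ(p)} with φ(p)(i) := φ(p_i) for each letter i of {1,…,t}. (2) Let B : ℝ^t → T^{≥1}(ℝ^d) be linear and W ⊆ T(ℝ^t). Then the set of paths X in ℝ^d such that the path Λ_B^* X := (t ↦ (⟨σ(X)_t, B(1)⟩, …, ⟨σ(X)_t, B(t)⟩)) lies in 𝒱(W) equals 𝒱(Λ_B W). -/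

import Mathlib

open scoped BigOperators TensorProduct

namespace PathVarieties

/-- Words over an alphabet `α`; the letters `{1,…,d}` of `ℝ^d` correspond to `α = Fin d`. -/
abbrev Word (α : Type*) := List α

/-- The tensor algebra `T(ℝ^d)`, identified with the free real vector space on words. -/
abbrev TA (α : Type*) := Word α →₀ ℝ

/-- The list of all (riffle) shuffles of two words. -/
def shuffles {α : Type*} : Word α → Word α → List (Word α)
  | [], v => [v]
  | a :: u, [] => [a :: u]
  | a :: u, b :: v =>
      ((shuffles u (b :: v)).map (a :: ·)) ++ ((shuffles (a :: u) v).map (b :: ·))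
termination_by u v => u.length + v.length
decreasing_by all_goals (simp only [List.length_cons]; omega)

/-- Shuffle product of two words, as an element of `T(ℝ^d)`. -/
noncomputable def shw {α : Type*} (u v : Word α) : TA α :=
  ((shuffles u v).map fun w => Finsupp.single w (1 : ℝ)).sum

/-- The shuffle product `⧢` on `T(ℝ^d)`, the bilinear extension of the shuffle of words. -/
noncomputable def sh {α : Type*} (x y : TA α) : TA α :=
  x.sum fun u cu => y.sum fun v cv => (cu * cv) • shw u v

/-- Right halfshuffle `u ≻ v` of words (`v` nonempty): shuffle `u` with `v` minus its
last letter, then append the last letter of `v`.  (This is the unique bilinear operation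
with `w ≻ a = wa` and `w ≻ (va) = (w≻v + v≻w)a`.) -/
noncomputable def rshw {α : Type*} (u v : Word α) : TA α :=
  ((shuffles u v.dropLast).map fun w =>
    Finsupp.single (w ++ v.drop (v.length - 1)) (1 : ℝ)).sum

/-- Right halfshuffle `≻` on `T^{≥1}(ℝ^d)`, extended bilinearly. -/
noncomputable def rsh {α : Type*} (x y : TA α) : TA α :=
  x.sum fun u cu => y.sum fun v cv => (cu * cv) • rshw u v

/-- Left halfshuffle `u ≺ v` of words (`u` nonempty): the first letter of `u` followed by
the shuffle of the rest of `u` with `v`.  (This is the unique bilinear operation with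
`a ≺ w = aw` and `(av) ≺ w = a(w≺v + v≺w)`.) -/
noncomputable def lshw {α : Type*} (u v : Word α) : TA α :=
  ((shuffles u.tail v).map fun w => Finsupp.single (u.take 1 ++ w) (1 : ℝ)).sum

/-- Left halfshuffle `≺` on `T^{≥1}(ℝ^d)`, extended bilinearly. -/
noncomputable def lsh {α : Type*} (x y : TA α) : TA α :=
  x.sum fun u cu => y.sum fun v cv => (cu * cv) • lshw u v

/-- The antipode `𝒜`, with `𝒜(i₁⋯iₙ) = (−1)ⁿ iₙ⋯i₁`. -/
noncomputable def antipode {α : Type*} (x : TA α) : TA α :=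
  x.sum fun w c => Finsupp.single w.reverse (((-1 : ℝ) ^ w.length) * c)

/-- Helper for `Λ_B`: value on a reversed word. -/
noncomputable def lamRev {α β : Type*} (B : α → TA β) : Word α → TA β
  | [] => Finsupp.single [] 1
  | [i] => B i
  | i :: w => rsh (lamRev B w) (B i)

/-- `Λ_B` on a word: `Λ_B e = e`, `Λ_B i = B i`, `Λ_B (w·i) = (Λ_B w) ≻ (Λ_B i)`. -/
noncomputable def lamW {α β : Type*} (B : α → TA β) (w : Word α) : TA β :=
  lamRev B w.reverse

/-- The linear map `Λ_B : T(ℝ^t) → T(ℝ^d)` induced by `B` on letters. -/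
noncomputable def Lam {α β : Type*} (B : α → TA β) (x : TA α) : TA β :=
  x.sum fun w c => c • lamW B w

/-- `splitEmb e j n w = Σ_{w = u₁⋯uₙ} e_j(u₁) ⧢ e_{j+1}(u₂) ⧢ ⋯ ⧢ e_{j+n−1}(uₙ)`,
the sum over all splittings of `w` into `n` consecutive (possibly empty) factors,
each factor relabelled letterwise by `e`. -/
noncomputable def splitEmb {α β : Type*} (e : ℕ → α → β) : ℕ → ℕ → Word α → TA β
  | _, 0, w => if w.isEmpty then Finsupp.single ([] : Word β) (1 : ℝ) else 0
  | j, k + 1, w => ∑ m ∈ Finset.range (w.length + 1),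
      sh (Finsupp.single ((w.take m).map (e j)) (1 : ℝ)) (splitEmb e (j + 1) k (w.drop m))

/-- `Σ_{x=uv} f(u)·v`: deconcatenate, evaluate the functional `f` on prefixes. -/
noncomputable def leftAct {α : Type*} (f : Word α → ℝ) (x : TA α) : TA α :=
  x.sum fun w c => c • ∑ k ∈ Finset.range (w.length + 1),
    f (w.take k) • Finsupp.single (w.drop k) (1 : ℝ)

/-- `Σ_{x=uv} u·f(v)`: deconcatenate, evaluate the functional `f` on suffixes. -/
noncomputable def rightAct {α : Type*} (f : Word α → ℝ) (x : TA α) : TA α :=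
  x.sum fun w c => c • ∑ k ∈ Finset.range (w.length + 1),
    f (w.drop k) • Finsupp.single (w.take k) (1 : ℝ)

/-- A raw path: a time horizon `T` together with a map `ℝ → ℝ^α`
(only the restriction to `[0,T]` is relevant). -/
structure RawPath (α : Type*) where
  T : ℝ
  toFun : ℝ → α → ℝ

/-- A path: positive time horizon, continuous on `[0,T]` and piecewise continuously
differentiable there (witnessed by a partition `0 = τ₀ < τ₁ < ⋯ < τₙ = T`). -/
def IsPath {α : Type*} (X : RawPath α) : Prop :=
  0 < X.T ∧ (∀ i, ContinuousOn (fun t => X.toFun t i) (Set.Icc 0 X.T)) ∧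
    ∃ (n : ℕ) (τ : Fin (n + 1) → ℝ), StrictMono τ ∧ τ 0 = 0 ∧ τ (Fin.last n) = X.T ∧
      ∀ (k : Fin n) (i : α), ContDiffOn ℝ 1 (fun t => X.toFun t i)
        (Set.Icc (τ k.castSucc) (τ k.succ))

/-- Iterated integrals, by recursion on the reversed word:
`sigRev X (i :: w) t = ∫₀ᵗ ⟨σ(X)ₛ, w.reverse⟩ dX⁽ⁱ⁾(s)`. -/
noncomputable def sigRev {α : Type*} (X : ℝ → α → ℝ) : Word α → ℝ → ℝ
  | [], _ => 1
  | i :: w, t => ∫ s in (0 : ℝ)..t, sigRev X w s * deriv (fun u => X u i) s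

/-- `⟨σ(X)_t, w⟩`, the iterated-integrals signature of `X` stopped at time `t`. -/
noncomputable def sigUpTo {α : Type*} (X : RawPath α) (t : ℝ) (w : Word α) : ℝ :=
  sigRev X.toFun w.reverse t

/-- `⟨σ(X), w⟩`, the iterated-integrals signature of the path `X` at a word `w`. -/
noncomputable def sig {α : Type*} (X : RawPath α) (w : Word α) : ℝ :=
  sigUpTo X X.T w

/-- Pairing of a word-indexed functional with an element of `T(ℝ^d)`. -/
noncomputable def pairF {α : Type*} (f : Word α → ℝ) (x : TA α) : ℝ :=
  x.sum fun w c => c * f w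

/-- `⟨σ(X), x⟩` for a tensor `x ∈ T(ℝ^d)` (linear in `x`). -/
noncomputable def pair {α : Type*} (X : RawPath α) (x : TA α) : ℝ :=
  Finsupp.linearCombination ℝ (sig X) x

/-- The path variety `𝒱(W)` of all paths whose signature kills every element of `W`. -/
def V {α : Type*} (W : Set (TA α)) : Set (RawPath α) :=
  {X | IsPath X ∧ ∀ x ∈ W, pair X x = 0}

/-- `ℐ(M)`, the space of tensors killed by the signature of every path in `M`. -/
noncomputable def Idl {α : Type*} (M : Set (RawPath α)) : Submodule ℝ (TA α) :=
  ⨅ X ∈ M, LinearMap.ker (Finsupp.linearCombination ℝ (sig X))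

/-- Concatenation `X ⊔ Y` of paths. -/
noncomputable def concat {α : Type*} (X Y : RawPath α) : RawPath α where
  T := X.T + Y.T
  toFun := fun t i =>
    if t ≤ X.T then X.toFun t i else Y.toFun (t - X.T) i + X.toFun X.T i - Y.toFun 0 i

/-- Time reversal `⟵X`. -/
def timeRev {α : Type*} (X : RawPath α) : RawPath α :=
  ⟨X.T, fun t i => X.toFun (X.T - t) i⟩

/-- `concatIter X n = X^{⊔(n+1)}`. -/
noncomputable def concatIter {α : Type*} (X : RawPath α) : ℕ → RawPath α
  | 0 => X
  | n + 1 => concat (concatIter X n) X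

/-- `X^{⊔n}`, the `n`-fold concatenation of `X` with itself (intended for `n ≥ 1`). -/
noncomputable def concatPow {α : Type*} (X : RawPath α) (n : ℕ) : RawPath α :=
  concatIter X (n - 1)

/-- `concatFold f k = f 0 ⊔ f 1 ⊔ ⋯ ⊔ f k`. -/
noncomputable def concatFold {α : Type*} (f : ℕ → RawPath α) : ℕ → RawPath α
  | 0 => f 0
  | k + 1 => concat (concatFold f k) (f (k + 1))

/-- The deconcatenation coproduct `Δ : T(ℝ^d) → T(ℝ^d) ⊗ T(ℝ^d)`,
`Δw = Σ_{w=uv} u ⊗ v`. -/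
noncomputable def deconc {α : Type*} (x : TA α) : TensorProduct ℝ (TA α) (TA α) :=
  x.sum fun w c => c • ∑ k ∈ Finset.range (w.length + 1),
    (Finsupp.single (w.take k) (1 : ℝ)) ⊗ₜ[ℝ] (Finsupp.single (w.drop k) (1 : ℝ))


lemma shuffles_nil_left {α : Type*} (v : Word α) : shuffles [] v = [v] := by
  simp [shuffles]

lemma shuffles_nil_right {α : Type*} (u : Word α) : shuffles u [] = [u] := by
  cases u <;> simp [shuffles]

lemma shuffles_cons_cons {α : Type*} (a b : α) (u v : Word α) :
    shuffles (a :: u) (b :: v) =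
      ((shuffles u (b :: v)).map (a :: ·)) ++ ((shuffles (a :: u) v).map (b :: ·)) := by
  rw [shuffles]

lemma length_mem_shuffles {α : Type*} : ∀ (u v : Word α), ∀ z ∈ shuffles u v,
    z.length = u.length + v.length := by
  intro u v
  induction u, v using shuffles.induct with
  | case1 v => simp [shuffles_nil_left]
  | case2 a u => simp [shuffles_nil_right]
  | case3 a u b v ih1 ih2 =>
      intro z hz
      rw [shuffles_cons_cons] at hz
      rcases List.mem_append.1 hz with h | h <;> rcases List.mem_map.1 h with ⟨z', hz', rfl⟩
      · have := ih1 z' hz'; simp at this ⊢; omega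
      · have := ih2 z' hz'; simp at this ⊢; omega

/-- Sum of `f` over the shuffles of `u` and `v`. -/
def msum {α : Type*} {M : Type*} [AddCommMonoid M] (f : Word α → M) (u v : Word α) : M :=
  ((shuffles u v).map f).sum

lemma msum_nil_left {α M : Type*} [AddCommMonoid M] (f : Word α → M) (v : Word α) :
    msum f [] v = f v := by simp [msum, shuffles_nil_left]

lemma msum_nil_right {α M : Type*} [AddCommMonoid M] (f : Word α → M) (u : Word α) :
    msum f u [] = f u := by simp [msum, shuffles_nil_right]

lemma msum_cons_cons {α M : Type*} [AddCommMonoid M] (f : Word α → M) (a b : α) (u v : Word α) :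
    msum f (a :: u) (b :: v)
      = msum (fun z => f (a :: z)) u (b :: v) + msum (fun z => f (b :: z)) (a :: u) v := by
  simp [msum, shuffles_cons_cons, List.map_map, Function.comp_def]

lemma msum_snoc {α M : Type*} [AddCommMonoid M] :
    ∀ N (u v : Word α), u.length + v.length ≤ N → ∀ (f : Word α → M) (a b : α),
      msum f (u ++ [a]) (v ++ [b])
        = msum (fun z => f (z ++ [a])) u (v ++ [b]) + msum (fun z => f (z ++ [b])) (u ++ [a]) v := by
  intro N
  induction N with
  | zero =>
      rintro u v h f a b
      have hu : u = [] := by cases u <;> simp_all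
      have hv : v = [] := by cases v <;> simp_all
      subst hu; subst hv
      simp only [List.nil_append]
      rw [show ([a] : Word α) = a :: [] from rfl, show ([b] : Word α) = b :: [] from rfl,
        msum_cons_cons]
      simp [msum_nil_left, msum_nil_right, add_comm]
  | succ N ih =>
      rintro u v h f a b
      match u, v with
      | [], [] =>
          simp only [List.nil_append]
          rw [show ([a] : Word α) = a :: [] from rfl, show ([b] : Word α) = b :: [] from rfl,
            msum_cons_cons]
          simp [msum_nil_left, msum_nil_right, add_comm]
      | [], c :: v' =>
          have h' : ([] : Word α).length + v'.length ≤ N := by simp at h ⊢; omega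
          have H := ih [] v' h' (fun z => f (c :: z)) a b
          simp only [List.nil_append] at H ⊢
          rw [List.cons_append, msum_cons_cons, msum_nil_left, H,
            msum_cons_cons (fun z => f (z ++ [b])) a c [] v']
          simp only [msum_nil_left, List.cons_append, List.nil_append, List.append_assoc]
          abel
      | c :: u', [] =>
          have h' : u'.length + ([] : Word α).length ≤ N := by simp at h ⊢; omega
          have H := ih u' [] h' (fun z => f (c :: z)) a b
          simp only [List.nil_append] at H ⊢
          rw [List.cons_append, msum_cons_cons, H,
            msum_cons_cons (fun z => f (z ++ [a])) c b u' []]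
          simp only [msum_nil_right, msum_nil_left, List.cons_append, List.nil_append,
            List.append_assoc]
          abel
      | c :: u', e :: v' =>
          have h1 : u'.length + (e :: v').length ≤ N := by simp at h ⊢; omega
          have h2 : (c :: u').length + v'.length ≤ N := by simp at h ⊢; omega
          have H1 := ih u' (e :: v') h1 (fun z => f (c :: z)) a b
          have H2 := ih (c :: u') v' h2 (fun z => f (e :: z)) a b
          simp only [List.cons_append] at H1 H2 ⊢
          rw [msum_cons_cons, H1, H2,
            msum_cons_cons (fun z => f (z ++ [a])) c e u' (v' ++ [b]),
            msum_cons_cons (fun z => f (z ++ [b])) c e (u' ++ [a]) v']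
          ac_rfl

lemma msum_rev {α M : Type*} [AddCommMonoid M] :
    ∀ N (u v : Word α), u.length + v.length ≤ N → ∀ (f : Word α → M),
      msum (fun z => f z.reverse) u v = msum f u.reverse v.reverse := by
  intro N
  induction N with
  | zero =>
      rintro u v h f
      have hu : u = [] := by cases u <;> simp_all
      have hv : v = [] := by cases v <;> simp_all
      subst hu; subst hv; simp [msum_nil_left]
  | succ N ih =>
      rintro u v h f
      match u, v with
      | [], v => simp [msum_nil_left]
      | c :: u', [] => simp [msum_nil_right]
      | c :: u', e :: v' =>
          rw [msum_cons_cons]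
          have h1 : u'.length + (e :: v').length ≤ N := by simp at h ⊢; omega
          have h2 : (c :: u').length + v'.length ≤ N := by simp at h ⊢; omega
          have e1 := ih u' (e :: v') h1 (fun z => f (z ++ [c]))
          have e2 := ih (c :: u') v' h2 (fun z => f (z ++ [e]))
          simp only [List.reverse_cons] at e1 e2 ⊢
          rw [e1, e2]
          exact (msum_snoc (u'.reverse.length + v'.reverse.length) u'.reverse v'.reverse
            le_rfl f c e).symm

lemma pairF_single {α : Type*} (f : Word α → ℝ) (w : Word α) (c : ℝ) :
    pairF f (Finsupp.single w c) = c * f w := by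
  simp [pairF, Finsupp.sum_single_index]

/-- `pairF f` as a linear map. -/
noncomputable def pairL {α : Type*} (f : Word α → ℝ) : TA α →ₗ[ℝ] ℝ :=
  Finsupp.linearCombination ℝ f

lemma pairF_eq_pairL {α : Type*} (f : Word α → ℝ) (x : TA α) : pairF f x = pairL f x := by
  simp [pairF, pairL, Finsupp.linearCombination_apply, Finsupp.sum, smul_eq_mul]

lemma pairF_add {α : Type*} (f : Word α → ℝ) (x y : TA α) :
    pairF f (x + y) = pairF f x + pairF f y := by
  simp [pairF_eq_pairL]

lemma pairF_smul {α : Type*} (f : Word α → ℝ) (c : ℝ) (x : TA α) :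
    pairF f (c • x) = c * pairF f x := by
  simp [pairF_eq_pairL]

lemma pairF_support_sum {α : Type*} (f : Word α → ℝ) (x : TA α) :
    pairF f x = ∑ w ∈ x.support, x w * f w := rfl

lemma pairF_shw {α : Type*} (f : Word α → ℝ) (u v : Word α) :
    pairF f (shw u v) = msum f u v := by
  unfold shw msum
  rw [pairF_eq_pairL, map_list_sum]
  simp [List.map_map, Function.comp_def, ← pairF_eq_pairL, pairF_single]

lemma pairF_rshw {α : Type*} (f : Word α → ℝ) (u v : Word α) :
    pairF f (rshw u v) = msum (fun z => f (z ++ v.drop (v.length - 1))) u v.dropLast := by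
  unfold rshw msum
  rw [pairF_eq_pairL, map_list_sum]
  simp [List.map_map, Function.comp_def, ← pairF_eq_pairL, pairF_single]

lemma pairF_finsuppSum {α β : Type*} (f : Word α → ℝ) (x : TA β) (g : Word β → ℝ → TA α) :
    pairF f (x.sum g) = ∑ w ∈ x.support, pairF f (g w (x w)) := by
  rw [pairF_eq_pairL, Finsupp.sum, map_sum]
  simp [← pairF_eq_pairL]

lemma pairF_sh {α : Type*} (f : Word α → ℝ) (x y : TA α) :
    pairF f (sh x y) = ∑ u ∈ x.support, ∑ v ∈ y.support,
      (x u * y v) * msum f u v := by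
  unfold sh
  rw [pairF_finsuppSum]
  refine Finset.sum_congr rfl fun u hu => ?_
  rw [pairF_finsuppSum]
  refine Finset.sum_congr rfl fun v hv => ?_
  rw [pairF_smul, pairF_shw]

lemma pairF_rsh {α : Type*} (f : Word α → ℝ) (x y : TA α) :
    pairF f (rsh x y) = ∑ u ∈ x.support, ∑ v ∈ y.support,
      (x u * y v) * pairF f (rshw u v) := by
  unfold rsh
  rw [pairF_finsuppSum]
  refine Finset.sum_congr rfl fun u hu => ?_
  rw [pairF_finsuppSum]
  refine Finset.sum_congr rfl fun v hv => ?_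
  rw [pairF_smul]

lemma pairF_Lam {α β : Type*} (f : Word β → ℝ) (B : α → TA β) (x : TA α) :
    pairF f (Lam B x) = ∑ w ∈ x.support, x w * pairF f (lamW B w) := by
  unfold Lam
  rw [pairF_finsuppSum]
  refine Finset.sum_congr rfl fun w hw => ?_
  rw [pairF_smul]

lemma dropLast_append_drop {α : Type*} (v : Word α) :
    v.dropLast ++ v.drop (v.length - 1) = v := by
  rw [List.dropLast_eq_take]; exact List.take_append_drop _ v

lemma rshw_nil_left {α : Type*} (v : Word α) : rshw ([] : Word α) v = Finsupp.single v 1 := by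
  unfold rshw
  rw [shuffles_nil_left]
  simp [dropLast_append_drop]

lemma rsh_single_one {α : Type*} (y : TA α) : rsh (Finsupp.single ([] : Word α) 1) y = y := by
  unfold rsh
  rw [Finsupp.sum_single_index]
  · rw [show (fun v cv => ((1 : ℝ) * cv) • rshw ([] : Word α) v) = fun v cv => Finsupp.single v cv from ?_]
    · exact Finsupp.sum_single y
    · funext v cv
      rw [rshw_nil_left, one_mul, Finsupp.smul_single, smul_eq_mul, mul_one]
  · simp only [zero_mul, zero_smul]
    exact Finset.sum_const_zero

lemma lamRev_cons {α β : Type*} (B : α → TA β) (i : α) (w : Word α) :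
    lamRev B (i :: w) = rsh (lamRev B w) (B i) := by
  cases w with
  | nil => simp [lamRev, rsh_single_one]
  | cons j w' => rfl

lemma shw_apply_nil {α : Type*} [DecidableEq α] (u v : Word α) :
    shw u v [] = (if u = [] ∧ v = [] then (1 : ℝ) else 0) := by
  unfold shw
  rw [← Finsupp.applyAddHom_apply, map_list_sum]
  simp only [List.map_map, Function.comp_def, Finsupp.applyAddHom_apply]
  by_cases hu : u = []
  · subst hu
    by_cases hv : v = []
    · subst hv; simp [shuffles_nil_left]
    · rw [shuffles_nil_left]
      simp [Finsupp.single_apply, hv]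
  · rw [List.sum_eq_zero, if_neg (by tauto)]
    intro r hr
    rcases List.mem_map.1 hr with ⟨z, hz, rfl⟩
    have hl := length_mem_shuffles u v z hz
    have hz0 : z ≠ [] := by
      intro h; subst h
      cases u with
      | nil => exact hu rfl
      | cons a u' => simp at hl; omega
    simp [Finsupp.single_apply, hz0]

lemma sh_apply_nil {α : Type*} [DecidableEq α] (x y : TA α) : sh x y [] = x [] * y [] := by
  have inner : ∀ (cu : ℝ), (y.sum fun v cv => ((cu * cv) • shw ([] : Word α) v)) [] = cu * y [] := by
    intro cu
    rw [Finsupp.sum_apply]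
    have : (y.sum fun v cv => ((cu * cv) • shw ([] : Word α) v) []) =
        ∑ v ∈ y.support, (if v = [] then cu * y v else 0) := by
      rw [Finsupp.sum]
      refine Finset.sum_congr rfl fun v hv => ?_
      rw [Finsupp.smul_apply, shw_apply_nil, smul_eq_mul]
      by_cases h : v = [] <;> simp [h]
    rw [this, Finset.sum_ite_eq' y.support ([] : Word α) (fun v => cu * y v)]
    by_cases hy : ([] : Word α) ∈ y.support
    · rw [if_pos hy]
    · rw [if_neg hy, Finsupp.notMem_support_iff.1 hy, mul_zero]
  unfold sh
  rw [Finsupp.sum_apply]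
  have huc : ∀ u (cu : ℝ), (y.sum fun v cv => (cu * cv) • shw u v) [] =
      if u = [] then cu * y [] else 0 := by
    intro u cu
    by_cases hu : u = []
    · subst hu; rw [if_pos rfl, ← inner cu, Finsupp.sum_apply]
    · rw [if_neg hu, Finsupp.sum_apply]
      rw [Finsupp.sum, Finset.sum_eq_zero]
      intro v hv
      rw [Finsupp.smul_apply, shw_apply_nil, if_neg (by tauto), smul_zero]
  have : (x.sum fun u cu => (y.sum fun v cv => (cu * cv) • shw u v) []) =
      ∑ u ∈ x.support, (if u = [] then x u * y [] else 0) := by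
    rw [Finsupp.sum]
    exact Finset.sum_congr rfl fun u hu => huc u (x u)
  rw [this, Finset.sum_ite_eq' x.support ([] : Word α) (fun u => x u * y [])]
  by_cases hx : ([] : Word α) ∈ x.support
  · rw [if_pos hx]
  · rw [if_neg hx, Finsupp.notMem_support_iff.1 hx, zero_mul]

/-! ### Analytic core -/

open Set MeasureTheory intervalIntegral

section Analysis

/-- A partition datum for the interval `[0, T]`. -/
structure Prt (T : ℝ) (n : ℕ) (τ : Fin (n + 1) → ℝ) : Prop where
  hT : 0 < T
  mono : StrictMono τ
  h0 : τ 0 = 0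
  hL : τ (Fin.last n) = T

variable {T : ℝ} {n : ℕ} {τ : Fin (n + 1) → ℝ}

namespace Prt

variable (hP : Prt T n τ)
include hP

lemma a_lt_b (k : Fin n) : τ k.castSucc < τ k.succ := hP.mono (Fin.castSucc_lt_succ (i := k))

lemma a_nonneg (k : Fin n) : 0 ≤ τ k.castSucc := by
  conv_lhs => rw [← hP.h0]
  exact hP.mono.monotone (Fin.zero_le _)

lemma b_le_T (k : Fin n) : τ k.succ ≤ T := by
  conv_rhs => rw [← hP.hL]
  exact hP.mono.monotone (Fin.le_last _)

lemma piece_subset (k : Fin n) : Icc (τ k.castSucc) (τ k.succ) ⊆ Icc 0 T :=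
  Icc_subset_Icc (hP.a_nonneg k) (hP.b_le_T k)

lemma ioo_subset (k : Fin n) : Ioo (τ k.castSucc) (τ k.succ) ⊆ Icc 0 T :=
  Ioo_subset_Icc_self.trans (hP.piece_subset k)

lemma mem_range_or_piece {s : ℝ} (hs : s ∈ Icc 0 T) :
    s ∈ Set.range τ ∨ ∃ k : Fin n, s ∈ Ioo (τ k.castSucc) (τ k.succ) := by
  by_cases hr : s ∈ Set.range τ
  · exact Or.inl hr
  right
  have hs0 : 0 < s := by
    rcases hs.1.lt_or_eq with h | h
    · exact h
    · exact absurd ⟨0, by rw [hP.h0, h]⟩ hr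
  have hsT : s < T := by
    rcases hs.2.lt_or_eq with h | h
    · exact h
    · exact absurd ⟨Fin.last n, by rw [hP.hL, h]⟩ hr
  set F := Finset.univ.filter (fun i : Fin (n+1) => τ i < s) with hF
  have hne : F.Nonempty := ⟨0, by simp [hF, hP.h0, hs0]⟩
  set K := F.max' hne with hK
  have hKs : τ K < s := by
    have := F.max'_mem hne
    simp [hF] at this
    exact this
  have hKlast : K < Fin.last n := by
    have : τ K < τ (Fin.last n) := by rw [hP.hL]; exact hKs.trans hsT
    exact hP.mono.lt_iff_lt.1 this
  refine ⟨⟨K.val, by omega⟩, ?_, ?_⟩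
  · have : (⟨K.val, by omega⟩ : Fin n).castSucc = K := by
      ext; simp
    rw [this]; exact hKs
  · by_contra hle
    push_neg at hle
    set k : Fin n := ⟨K.val, by omega⟩ with hk
    have hne' : τ k.succ ≠ s := fun h => hr ⟨k.succ, h⟩
    have hlt : τ k.succ < s := lt_of_le_of_ne hle hne'
    have hmem : k.succ ∈ F := by simp [hF, hlt]
    have := F.le_max' k.succ hmem
    rw [← hK] at this
    have : (k.succ : Fin (n+1)).val ≤ K.val := this
    simp [hk] at this
  -- done

omit hP in
lemma range_null : volume (Set.range τ) = 0 :=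
  (Set.finite_range τ).measure_zero volume

omit hP in
/-- Functions piecewise continuous w.r.t. the partition. -/
def Pc (_hP : Prt T n τ) (f : ℝ → ℝ) : Prop :=
  ∀ k : Fin n, ∃ g : ℝ → ℝ, ContinuousOn g (Icc (τ k.castSucc) (τ k.succ)) ∧
    ∀ s ∈ Ioo (τ k.castSucc) (τ k.succ), f s = g s

lemma Pc.zero : hP.Pc (fun _ => 0) := fun k => ⟨fun _ => 0, continuousOn_const, fun _ _ => rfl⟩

lemma Pc.add {f g : ℝ → ℝ} (hf : hP.Pc f) (hg : hP.Pc g) : hP.Pc (fun s => f s + g s) := by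
  intro k
  obtain ⟨f', hf', hfe⟩ := hf k
  obtain ⟨g', hg', hge⟩ := hg k
  exact ⟨fun s => f' s + g' s, hf'.add hg', fun s hs => by dsimp only; rw [hfe s hs, hge s hs]⟩

lemma Pc.contMul {F f : ℝ → ℝ} (hF : ContinuousOn F (Icc 0 T)) (hf : hP.Pc f) :
    hP.Pc (fun s => F s * f s) := by
  intro k
  obtain ⟨g, hg, hge⟩ := hf k
  exact ⟨fun s => F s * g s, (hF.mono (hP.piece_subset k)).mul hg,
    fun s hs => by dsimp only; rw [hge s hs]⟩

lemma Pc.constMul {f : ℝ → ℝ} (c : ℝ) (hf : hP.Pc f) : hP.Pc (fun s => c * f s) :=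
  Pc.contMul hP continuousOn_const hf

/-- ae-equality on `Ι 0 t` for functions agreeing on the open pieces. -/
lemma ae_of_pieces {f g : ℝ → ℝ} (h : ∀ k : Fin n, ∀ s ∈ Ioo (τ k.castSucc) (τ k.succ), f s = g s)
    {t : ℝ} (ht : t ∈ Icc 0 T) : ∀ᵐ s, s ∈ Set.uIoc 0 t → f s = g s := by
  refine MeasureTheory.ae_iff.mpr (measure_mono_null ?_ (range_null (τ := τ)))
  intro s hs
  simp only [Set.mem_setOf_eq, Classical.not_imp] at hs
  obtain ⟨hst, hne⟩ := hs
  by_contra hr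
  have hs' : s ∈ Icc 0 T := by
    rw [Set.uIoc_of_le ht.1] at hst
    exact ⟨le_of_lt hst.1, hst.2.trans ht.2⟩
  rcases hP.mem_range_or_piece hs' with h1 | ⟨k, hk⟩
  · exact hr h1
  · exact hne (h k s hk)

lemma Pc.intervalIntegrable {f : ℝ → ℝ} (hf : hP.Pc f) {x y : ℝ}
    (hx : x ∈ Icc 0 T) (hy : y ∈ Icc 0 T) : IntervalIntegrable f volume x y := by
  have piece : ∀ k : Fin n, IntervalIntegrable f volume (τ k.castSucc) (τ k.succ) := by
    intro k
    obtain ⟨g, hg, hge⟩ := hf k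
    rw [intervalIntegrable_iff_integrableOn_Ioc_of_le (hP.a_lt_b k).le]
    have hgi : IntegrableOn g (Ioc (τ k.castSucc) (τ k.succ)) volume :=
      (hg.integrableOn_Icc).mono_set Ioc_subset_Icc_self
    refine MeasureTheory.Integrable.congr hgi ?_
    rw [Filter.EventuallyEq, ae_restrict_iff' measurableSet_Ioc]
    refine MeasureTheory.ae_iff.mpr (measure_mono_null ?_ (measure_singleton (τ k.succ)))
    intro s hs
    simp only [Set.mem_setOf_eq, Classical.not_imp] at hs
    obtain ⟨hs1, hs2⟩ := hs
    simp only [Set.mem_singleton_iff]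
    by_contra hne
    exact hs2 ((hge s ⟨hs1.1, lt_of_le_of_ne hs1.2 hne⟩).symm)
  have chain : ∀ m : ℕ, ∀ hm : m ≤ n,
      IntervalIntegrable f volume 0 (τ ⟨m, Nat.lt_succ_of_le hm⟩) := by
    intro m
    induction m with
    | zero =>
        intro hm
        have h0 : τ ⟨0, Nat.lt_succ_of_le hm⟩ = 0 := by
          rw [show (⟨0, Nat.lt_succ_of_le hm⟩ : Fin (n+1)) = 0 from rfl, hP.h0]
        rw [h0]
    | succ m ih =>
        intro hm
        have hm' : m < n := hm
        have e1 : (⟨m, hm'⟩ : Fin n).castSucc = ⟨m, Nat.lt_succ_of_le (Nat.le_of_lt hm')⟩ := rfl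
        have e2 : (⟨m, hm'⟩ : Fin n).succ = ⟨m + 1, Nat.lt_succ_of_le hm⟩ := rfl
        have := piece ⟨m, hm'⟩
        rw [e1, e2] at this
        exact (ih (Nat.le_of_lt hm')).trans this
  have chainT : IntervalIntegrable f volume 0 T := by
    have := chain n le_rfl
    rw [show (⟨n, Nat.lt_succ_of_le le_rfl⟩ : Fin (n+1)) = Fin.last n from rfl, hP.hL] at this
    exact this
  refine chainT.mono_set ?_
  rw [Set.uIcc_of_le hP.hT.le]
  exact Set.uIcc_subset_Icc hx hy

/-- Telescoping of integrals along the partition. -/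
lemma telescope {f F : ℝ → ℝ}
    (hint : ∀ x ∈ Icc 0 T, ∀ y ∈ Icc 0 T, IntervalIntegrable f volume x y)
    (hpiece : ∀ k : Fin n, ∀ y ∈ Icc (τ k.castSucc) (τ k.succ),
      ∫ s in (τ k.castSucc)..y, f s = F y - F (τ k.castSucc)) :
    ∀ t ∈ Icc 0 T, ∫ s in (0:ℝ)..t, f s = F t - F 0 := by
  have main : ∀ m : ℕ, ∀ hm : m ≤ n, ∀ t ∈ Icc 0 (τ ⟨m, Nat.lt_succ_of_le hm⟩),
      ∫ s in (0:ℝ)..t, f s = F t - F 0 := by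
    intro m
    induction m with
    | zero =>
        intro hm t ht'
        rw [show (⟨0, Nat.lt_succ_of_le hm⟩ : Fin (n+1)) = 0 from rfl, hP.h0] at ht'
        have : t = 0 := le_antisymm ht'.2 ht'.1
        subst this
        rw [integral_same, sub_self]
    | succ m ih =>
        intro hm t ht'
        have hm' : m < n := hm
        have hmle : m ≤ n := Nat.le_of_lt hm'
        set c : ℝ := τ ⟨m, Nat.lt_succ_of_le hmle⟩ with hc
        have hc0 : 0 ≤ c := by
          rw [hc, ← hP.h0]
          exact hP.mono.monotone (by exact Fin.mk_le_mk.mpr (Nat.zero_le m))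
        have hcT : c ≤ T := by
          rw [hc, ← hP.hL]
          exact hP.mono.monotone (by exact Fin.mk_le_mk.mpr hmle)
        have hbT : τ ⟨m + 1, Nat.lt_succ_of_le hm⟩ ≤ T := by
          rw [← hP.hL]
          exact hP.mono.monotone (by exact Fin.mk_le_mk.mpr hm)
        by_cases hcase : t ≤ c
        · exact ih hmle t ⟨ht'.1, hcase⟩
        · push_neg at hcase
          have hcI : c ∈ Icc 0 T := ⟨hc0, hcT⟩
          have htI : t ∈ Icc 0 T := ⟨ht'.1, le_trans ht'.2 hbT⟩
          rw [← integral_add_adjacent_intervals (hint 0 ⟨le_rfl, hP.hT.le⟩ c hcI)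
            (hint c hcI t htI)]
          rw [ih hmle c ⟨hc0, le_rfl⟩]
          have e1 : (⟨m, hm'⟩ : Fin n).castSucc = (⟨m, Nat.lt_succ_of_le hmle⟩ : Fin (n+1)) := rfl
          have e2 : (⟨m, hm'⟩ : Fin n).succ = (⟨m + 1, Nat.lt_succ_of_le hm⟩ : Fin (n+1)) := rfl
          have hp := hpiece ⟨m, hm'⟩ t
          rw [e1, e2] at hp
          rw [hp ⟨hcase.le, ht'.2⟩]
          ring
  intro t ht
  refine main n le_rfl t ?_
  rw [show (⟨n, Nat.lt_succ_of_le le_rfl⟩ : Fin (n+1)) = Fin.last n from rfl, hP.hL]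
  exact ht

/-- Admissible pair: `F` is continuous on `[0,T]` and has piecewise derivative `f`. -/
def Adm (_hP : Prt T n τ) (F f : ℝ → ℝ) : Prop :=
  ContinuousOn F (Icc 0 T) ∧ Pc _hP f ∧
    ∀ k : Fin n, ∀ x ∈ Ioo (τ k.castSucc) (τ k.succ), HasDerivAt F (f x) x

lemma Adm.cont {F f : ℝ → ℝ} (hA : hP.Adm F f) : ContinuousOn F (Icc 0 T) := hA.1

lemma Adm.pc {F f : ℝ → ℝ} (hA : hP.Adm F f) : hP.Pc f := hA.2.1

lemma Adm.hasDeriv {F f : ℝ → ℝ} (hA : hP.Adm F f) :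
    ∀ k : Fin n, ∀ x ∈ Ioo (τ k.castSucc) (τ k.succ), HasDerivAt F (f x) x := hA.2.2

lemma Adm.ftc {F f : ℝ → ℝ} (hA : hP.Adm F f) :
    ∀ t ∈ Icc 0 T, F t = F 0 + ∫ s in (0:ℝ)..t, f s := by
  have htel := hP.telescope (f := f) (F := F)
    (fun x hx y hy => Pc.intervalIntegrable hP (Adm.pc hP hA) hx hy) ?_
  · intro t ht
    rw [htel t ht]; ring
  · intro k y hy
    refine integral_eq_sub_of_hasDeriv_right_of_le hy.1
      ((Adm.cont hP hA).mono ((Icc_subset_Icc le_rfl hy.2).trans (hP.piece_subset k))) ?_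
      (Pc.intervalIntegrable hP (Adm.pc hP hA) (hP.piece_subset k ⟨le_rfl, (hP.a_lt_b k).le⟩)
        (hP.piece_subset k hy))
    intro x hx
    exact (Adm.hasDeriv hP hA k x ⟨hx.1, hx.2.trans_le hy.2⟩).hasDerivWithinAt

lemma Adm.const (c : ℝ) : hP.Adm (fun _ => c) (fun _ => 0) :=
  ⟨continuousOn_const, Pc.zero hP, fun _ _ _ => hasDerivAt_const _ _⟩

lemma Adm.add {F f G g : ℝ → ℝ} (hF : hP.Adm F f) (hG : hP.Adm G g) :
    hP.Adm (fun s => F s + G s) (fun s => f s + g s) :=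
  ⟨(Adm.cont hP hF).add (Adm.cont hP hG), Pc.add hP (Adm.pc hP hF) (Adm.pc hP hG),
    fun k x hx => (Adm.hasDeriv hP hF k x hx).add (Adm.hasDeriv hP hG k x hx)⟩

lemma Adm.mul {F f G g : ℝ → ℝ} (hF : hP.Adm F f) (hG : hP.Adm G g) :
    hP.Adm (fun s => F s * G s) (fun s => f s * G s + F s * g s) :=
  ⟨(Adm.cont hP hF).mul (Adm.cont hP hG),
    Pc.add hP (by
      have : hP.Pc (fun s => G s * f s) := Pc.contMul hP (Adm.cont hP hG) (Adm.pc hP hF)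
      intro k
      obtain ⟨h, hh, hhe⟩ := this k
      exact ⟨h, hh, fun s hs => by dsimp only; rw [mul_comm]; exact hhe s hs⟩)
      (Pc.contMul hP (Adm.cont hP hF) (Adm.pc hP hG)),
    fun k x hx => (Adm.hasDeriv hP hF k x hx).mul (Adm.hasDeriv hP hG k x hx)⟩

lemma Adm.constMul {F f : ℝ → ℝ} (c : ℝ) (hF : hP.Adm F f) :
    hP.Adm (fun s => c * F s) (fun s => c * f s) :=
  ⟨continuousOn_const.mul (Adm.cont hP hF), Pc.constMul hP c (Adm.pc hP hF),
    fun k x hx => (Adm.hasDeriv hP hF k x hx).const_mul c⟩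

lemma Adm.sum {ι : Type*} (s : Finset ι) (F f : ι → ℝ → ℝ)
    (h : ∀ i ∈ s, hP.Adm (F i) (f i)) :
    hP.Adm (fun t => ∑ i ∈ s, F i t) (fun t => ∑ i ∈ s, f i t) := by
  classical
  induction s using Finset.induction_on with
  | empty => simpa using Adm.const hP 0
  | insert a s' ha ih =>
      have h1 := Adm.add hP (h a (Finset.mem_insert_self a s'))
        (ih (fun i hi => h i (Finset.mem_insert_of_mem hi)))
      simpa [Finset.sum_insert ha] using h1

lemma Adm.congrF {F F₂ f : ℝ → ℝ} (hA : hP.Adm F f) (he : ∀ s ∈ Icc 0 T, F₂ s = F s) :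
    hP.Adm F₂ f := by
  refine ⟨(Adm.cont hP hA).congr he, Adm.pc hP hA, fun k x hx => ?_⟩
  refine (Adm.hasDeriv hP hA k x hx).congr_of_eventuallyEq ?_
  refine Filter.eventuallyEq_of_mem (isOpen_Ioo.mem_nhds hx) (fun y hy => ?_)
  exact he y (hP.ioo_subset k hy)

lemma Adm.X {Xi : ℝ → ℝ} (hc : ContinuousOn Xi (Icc 0 T))
    (hd : ∀ k : Fin n, ContDiffOn ℝ 1 Xi (Icc (τ k.castSucc) (τ k.succ))) :
    hP.Adm Xi (deriv Xi) := by
  refine ⟨hc, ?_, ?_⟩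
  · intro k
    refine ⟨derivWithin Xi (Icc (τ k.castSucc) (τ k.succ)),
      (hd k).continuousOn_derivWithin (uniqueDiffOn_Icc (hP.a_lt_b k)) le_rfl,
      fun s hs => ?_⟩
    exact (derivWithin_of_mem_nhds (mem_nhds_iff.2
      ⟨Ioo _ _, Ioo_subset_Icc_self, isOpen_Ioo, hs⟩)).symm
  · intro k x hx
    have hdiff : DifferentiableAt ℝ Xi x := by
      refine DifferentiableWithinAt.differentiableAt
        ((hd k).differentiableOn one_ne_zero x (Ioo_subset_Icc_self hx)) ?_
      exact mem_nhds_iff.2 ⟨Ioo _ _, Ioo_subset_Icc_self, isOpen_Ioo, hx⟩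
    exact hdiff.hasDerivAt

lemma Pc.primitive {f : ℝ → ℝ} (hf : hP.Pc f) :
    hP.Adm (fun t => ∫ s in (0:ℝ)..t, f s) f := by
  refine ⟨?_, hf, ?_⟩
  · have hint : IntegrableOn f (uIcc 0 T) volume := by
      rw [Set.uIcc_of_le hP.hT.le]
      exact (intervalIntegrable_iff_integrableOn_Icc_of_le hP.hT.le).1
        (Pc.intervalIntegrable hP hf ⟨le_rfl, hP.hT.le⟩ ⟨hP.hT.le, le_rfl⟩)
    have := continuousOn_primitive_interval (a := 0) (b := T) (μ := volume) hint
    rwa [Set.uIcc_of_le hP.hT.le] at this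
  · intro k x hx
    obtain ⟨g, hg, hge⟩ := hf k
    have hfc : ContinuousOn f (Ioo (τ k.castSucc) (τ k.succ)) :=
      (hg.mono Ioo_subset_Icc_self).congr hge
    refine integral_hasDerivAt_right
      (Pc.intervalIntegrable hP hf ⟨le_rfl, hP.hT.le⟩ (hP.ioo_subset k hx))
      (hfc.stronglyMeasurableAtFilter isOpen_Ioo x hx) ?_
    exact hfc.continuousAt (isOpen_Ioo.mem_nhds hx)

lemma Adm.contDiffOn {F f : ℝ → ℝ} (hA : hP.Adm F f) (k : Fin n) :
    ContDiffOn ℝ 1 F (Icc (τ k.castSucc) (τ k.succ)) := by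
  obtain ⟨g, hg, hge⟩ := Adm.pc hP hA k
  set a := τ k.castSucc with ha
  set b := τ k.succ with hb
  have hab : a < b := hP.a_lt_b k
  set pr : ℝ → ℝ := fun s => max a (min b s) with hpr
  have hprc : Continuous pr := continuous_const.max (continuous_const.min continuous_id)
  have hmem : ∀ s, pr s ∈ Icc a b :=
    fun s => ⟨le_max_left _ _, max_le hab.le (min_le_left _ _)⟩
  have hpr_id : ∀ s ∈ Icc a b, pr s = s := by
    intro s hs
    rw [hpr]; dsimp only
    rw [min_eq_right hs.2, max_eq_right hs.1]
  set g' : ℝ → ℝ := fun s => g (pr s) with hg'def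
  have hg' : Continuous g' := hg.comp_continuous hprc hmem
  set Fk : ℝ → ℝ := fun u => F a + ∫ s in a..u, g' s with hFk
  have hFkD : ∀ u, HasDerivAt Fk (g' u) u := by
    intro u
    exact HasDerivAt.const_add (F a)
      (integral_hasDerivAt_right (hg'.intervalIntegrable a u)
        (hg'.stronglyMeasurableAtFilter _ _) hg'.continuousAt)
  have hFkC1 : ContDiff ℝ 1 Fk := by
    rw [contDiff_one_iff_deriv]
    refine ⟨fun u => (hFkD u).differentiableAt, ?_⟩
    have : deriv Fk = g' := funext fun u => (hFkD u).deriv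
    rw [this]; exact hg'
  refine hFkC1.contDiffOn.congr ?_
  intro u hu
  have haI : a ∈ Icc 0 T := hP.piece_subset k ⟨le_rfl, hab.le⟩
  have huI : u ∈ Icc 0 T := hP.piece_subset k hu
  have h1 := Adm.ftc hP hA a haI
  have h2 := Adm.ftc hP hA u huI
  have hadd := integral_add_adjacent_intervals
    (Pc.intervalIntegrable hP (Adm.pc hP hA) ⟨le_rfl, hP.hT.le⟩ haI)
    (Pc.intervalIntegrable hP (Adm.pc hP hA) haI huI) (μ := volume) (f := f)
  have hcongr : ∫ s in a..u, f s = ∫ s in a..u, g' s := by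
    refine integral_congr_ae ?_
    have hΙ : Set.uIoc a u = Ioc a u := Set.uIoc_of_le hu.1
    refine MeasureTheory.ae_iff.mpr (measure_mono_null ?_ (measure_singleton b))
    intro s hs
    simp only [Set.mem_setOf_eq, Classical.not_imp] at hs
    obtain ⟨hs1, hs2⟩ := hs
    rw [hΙ] at hs1
    simp only [Set.mem_singleton_iff]
    by_contra hne
    have hsIoo : s ∈ Ioo a b := ⟨hs1.1, lt_of_le_of_ne (hs1.2.trans hu.2) hne⟩
    refine hs2 ?_
    rw [hge s hsIoo, hg'def]
    dsimp only
    rw [hpr_id s (Ioo_subset_Icc_self hsIoo)]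
  rw [hFk]
  dsimp only
  rw [← hcongr]
  have hfu : ∫ s in a..u, f s = F u - F a := by
    rw [h1, h2, ← hadd]; ring
  rw [hfu]
  ring

end Prt

end Analysis

/-! ### Integrals of list sums -/

lemma list_ii {β : Type*} (l : List β) (G : β → ℝ → ℝ) {x y : ℝ}
    (h : ∀ z ∈ l, IntervalIntegrable (G z) volume x y) :
    IntervalIntegrable (fun s => (l.map (fun z => G z s)).sum) volume x y := by
  induction l with
  | nil => simpa using intervalIntegrable_const (c := (0:ℝ))
  | cons a l ih =>
      simp only [List.map_cons, List.sum_cons]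
      exact (h a (by simp)).add (ih (fun z hz => h z (by simp [hz])))

lemma list_integral {β : Type*} (l : List β) (G : β → ℝ → ℝ) {x y : ℝ}
    (h : ∀ z ∈ l, IntervalIntegrable (G z) volume x y) :
    ∫ s in x..y, (l.map (fun z => G z s)).sum = (l.map (fun z => ∫ s in x..y, G z s)).sum := by
  induction l with
  | nil => simp
  | cons a l ih =>
      simp only [List.map_cons, List.sum_cons]
      rw [integral_add (h a (by simp)) (list_ii l G (fun z hz => h z (by simp [hz]))),
        ih (fun z hz => h z (by simp [hz]))]

lemma msum_mul_right {α : Type*} (f : Word α → ℝ) (c : ℝ) (u v : Word α) :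
    msum (fun z => f z * c) u v = msum f u v * c := by
  simp [msum, ← List.sum_map_mul_right, List.map_map, Function.comp_def]

lemma msum_congr {α M : Type*} [AddCommMonoid M] {f g : Word α → M} (h : ∀ z, f z = g z)
    (u v : Word α) : msum f u v = msum g u v := by
  have : f = g := funext h
  rw [this]

lemma finset_ii {ι : Type*} (s : Finset ι) (G : ι → ℝ → ℝ) {x y : ℝ}
    (h : ∀ i ∈ s, IntervalIntegrable (G i) volume x y) :
    IntervalIntegrable (fun t => ∑ i ∈ s, G i t) volume x y := by
  classical
  induction s using Finset.induction_on with
  | empty => simpa using intervalIntegrable_const (c := (0:ℝ))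
  | insert a s' ha ih =>
      have h1 := (h a (Finset.mem_insert_self a s')).add
        (ih (fun i hi => h i (Finset.mem_insert_of_mem hi)))
      simpa [Finset.sum_insert ha] using h1

/-! ### Signature analysis -/

/-- Canonical piecewise derivative of `sigRev X u`. -/
noncomputable def DS {α : Type*} (X : ℝ → α → ℝ) : Word α → ℝ → ℝ
  | [] => fun _ => 0
  | i :: w => fun s => sigRev X w s * deriv (fun u => X u i) s

lemma sigRev_nil_eq {α : Type*} (X : ℝ → α → ℝ) : sigRev X [] = fun _ => (1:ℝ) := rfl

lemma sigRev_cons_eq {α : Type*} (X : ℝ → α → ℝ) (i : α) (w : Word α) :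
    sigRev X (i :: w) = fun t => ∫ s in (0 : ℝ)..t, sigRev X w s * deriv (fun u => X u i) s :=
  rfl

lemma sigRev_zero_cons {α : Type*} (X : ℝ → α → ℝ) (i : α) (w : Word α) :
    sigRev X (i :: w) 0 = 0 := by
  simp [sigRev]

section SigAnalysis

variable {d : ℕ} {X : ℝ → Fin d → ℝ} {T : ℝ} {n : ℕ} {τ : Fin (n + 1) → ℝ}
variable (hP : Prt T n τ)
variable (hXc : ∀ i, ContinuousOn (fun t => X t i) (Icc 0 T))
variable (hXd : ∀ (k : Fin n) i, ContDiffOn ℝ 1 (fun t => X t i) (Icc (τ k.castSucc) (τ k.succ)))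

include hP hXc hXd

lemma admX (i : Fin d) : hP.Adm (fun t => X t i) (deriv (fun t => X t i)) :=
  Prt.Adm.X hP (hXc i) (fun k => hXd k i)

lemma adm_sigRev : ∀ u : Word (Fin d), hP.Adm (sigRev X u) (DS X u) := by
  intro u
  induction u with
  | nil =>
      rw [sigRev_nil_eq, show DS X ([] : Word (Fin d)) = fun _ => (0:ℝ) from rfl]
      exact Prt.Adm.const hP 1
  | cons i w ih =>
      rw [sigRev_cons_eq, show DS X (i :: w)
        = fun s => sigRev X w s * deriv (fun u => X u i) s from rfl]
      exact Prt.Pc.primitive hP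
        (Prt.Pc.contMul hP (Prt.Adm.cont hP ih) (Prt.Adm.pc hP (admX hP hXc hXd i)))

lemma pc_DS (u : Word (Fin d)) : hP.Pc (DS X u) := Prt.Adm.pc hP (adm_sigRev hP hXc hXd u)

lemma ii_sig_mul_deriv (z : Word (Fin d)) (i : Fin d) {x y : ℝ} (hx : x ∈ Icc 0 T)
    (hy : y ∈ Icc 0 T) :
    IntervalIntegrable (fun s => sigRev X z s * deriv (fun u => X u i) s) volume x y :=
  Prt.Pc.intervalIntegrable hP
    (Prt.Pc.contMul hP (Prt.Adm.cont hP (adm_sigRev hP hXc hXd z))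
      (Prt.Adm.pc hP (admX hP hXc hXd i))) hx hy

/-- The shuffle identity for iterated integrals. -/
lemma shufId : ∀ N : ℕ, ∀ u v : Word (Fin d), u.length + v.length ≤ N →
    ∀ t ∈ Icc 0 T, sigRev X u t * sigRev X v t = msum (fun z => sigRev X z t) u v := by
  intro N
  induction N with
  | zero =>
      intro u v h t ht
      have hu : u = [] := by cases u <;> simp_all
      have hv : v = [] := by cases v <;> simp_all
      subst hu; subst hv
      simp [sigRev, msum_nil_left]
  | succ N ih =>
      intro u v h t ht
      match u, v with
      | [], v => simp [sigRev, msum_nil_left]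
      | a :: u', [] => rw [msum_nil_right]; simp [sigRev]
      | a :: u', b :: v' =>
          have h1 : u'.length + (b :: v').length ≤ N := by simp at h ⊢; omega
          have h2 : (a :: u').length + v'.length ≤ N := by simp at h ⊢; omega
          have hIcc : ∀ s, s ∈ Icc 0 t → s ∈ Icc 0 T :=
            fun s hs => ⟨hs.1, hs.2.trans ht.2⟩
          -- FTC for the product
          have hprod := Prt.Adm.mul hP (adm_sigRev hP hXc hXd (a :: u'))
            (adm_sigRev hP hXc hXd (b :: v'))
          have hftc := Prt.Adm.ftc hP hprod t ht
          rw [hftc, sigRev_zero_cons, sigRev_zero_cons, zero_mul, zero_add]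
          -- RHS
          rw [msum_cons_cons]
          have hintL : ∀ z ∈ shuffles u' (b :: v'),
              IntervalIntegrable (fun s => sigRev X z s * deriv (fun u => X u a) s)
                volume 0 t :=
            fun z _ => ii_sig_mul_deriv hP hXc hXd z a ⟨le_rfl, hP.hT.le⟩ (hIcc t ⟨ht.1, le_rfl⟩)
          have hintR : ∀ z ∈ shuffles (a :: u') v',
              IntervalIntegrable (fun s => sigRev X z s * deriv (fun u => X u b) s)
                volume 0 t :=
            fun z _ => ii_sig_mul_deriv hP hXc hXd z b ⟨le_rfl, hP.hT.le⟩ (hIcc t ⟨ht.1, le_rfl⟩)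
          have e1 : msum (fun z => sigRev X (a :: z) t) u' (b :: v')
              = ∫ s in (0:ℝ)..t,
                  (((shuffles u' (b :: v')).map
                    (fun z => sigRev X z s * deriv (fun u => X u a) s)).sum) := by
            rw [show (fun z => sigRev X (a :: z) t)
              = fun z => ∫ s in (0:ℝ)..t, sigRev X z s * deriv (fun u => X u a) s from rfl]
            exact (list_integral _ _ hintL).symm
          have e2 : msum (fun z => sigRev X (b :: z) t) (a :: u') v'
              = ∫ s in (0:ℝ)..t,
                  (((shuffles (a :: u') v').map
                    (fun z => sigRev X z s * deriv (fun u => X u b) s)).sum) := by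
            rw [show (fun z => sigRev X (b :: z) t)
              = fun z => ∫ s in (0:ℝ)..t, sigRev X z s * deriv (fun u => X u b) s from rfl]
            exact (list_integral _ _ hintR).symm
          rw [e1, e2, ← integral_add (list_ii _ _ hintL) (list_ii _ _ hintR)]
          refine integral_congr ?_
          intro s hs
          rw [Set.uIcc_of_le ht.1] at hs
          have hsT : s ∈ Icc 0 T := hIcc s hs
          have ihl := ih u' (b :: v') h1 s hsT
          have ihr := ih (a :: u') v' h2 s hsT
          have eL : ((shuffles u' (b :: v')).map
              (fun z => sigRev X z s * deriv (fun u => X u a) s)).sum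
              = (sigRev X u' s * sigRev X (b :: v') s) * deriv (fun u => X u a) s := by
            rw [show ((shuffles u' (b :: v')).map
                (fun z => sigRev X z s * deriv (fun u => X u a) s)).sum
              = msum (fun z => sigRev X z s * deriv (fun u => X u a) s) u' (b :: v') from rfl]
            rw [msum_mul_right (fun z => sigRev X z s) (deriv (fun u => X u a) s) u' (b :: v')]
            rw [← ihl]
          have eR : ((shuffles (a :: u') v').map
              (fun z => sigRev X z s * deriv (fun u => X u b) s)).sum
              = (sigRev X (a :: u') s * sigRev X v' s) * deriv (fun u => X u b) s := by
            rw [show ((shuffles (a :: u') v').map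
                (fun z => sigRev X z s * deriv (fun u => X u b) s)).sum
              = msum (fun z => sigRev X z s * deriv (fun u => X u b) s) (a :: u') v' from rfl]
            rw [msum_mul_right (fun z => sigRev X z s) (deriv (fun u => X u b) s) (a :: u') v']
            rw [← ihr]
          simp only [eL, eR]
          rw [show DS X (a :: u') s = sigRev X u' s * deriv (fun u => X u a) s from rfl,
            show DS X (b :: v') s = sigRev X v' s * deriv (fun u => X u b) s from rfl]
          ring

/-- `⟨σ(X)_s, y⟩` as a function of `s`. -/
noncomputable def PFn (X : ℝ → Fin d → ℝ) (y : TA (Fin d)) : ℝ → ℝ :=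
  fun s => pairF (fun w => sigRev X w.reverse s) y

/-- Its canonical piecewise derivative. -/
noncomputable def DFn (X : ℝ → Fin d → ℝ) (y : TA (Fin d)) : ℝ → ℝ :=
  fun s => ∑ w ∈ y.support, y w * DS X w.reverse s

omit hP hXc hXd in
lemma PFn_eq (y : TA (Fin d)) :
    PFn X y = fun s => ∑ w ∈ y.support, y w * sigRev X w.reverse s := rfl

lemma adm_PFn (y : TA (Fin d)) : hP.Adm (PFn X y) (DFn X y) := by
  rw [PFn_eq]
  exact Prt.Adm.sum hP y.support
    (fun w => fun s => y w * sigRev X w.reverse s)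
    (fun w => fun s => y w * DS X w.reverse s)
    (fun w _ => Prt.Adm.constMul hP (y w) (adm_sigRev hP hXc hXd w.reverse))

omit hP hXc hXd in
lemma PFn_zero {y : TA (Fin d)} (hy : y [] = 0) : PFn X y 0 = 0 := by
  rw [PFn_eq]
  refine Finset.sum_eq_zero fun w hw => ?_
  have hwne : w ≠ [] := fun h => (Finsupp.mem_support_iff.1 hw) (h ▸ hy)
  have : w.reverse ≠ [] := by simpa using hwne
  cases hrev : w.reverse with
  | nil => exact absurd hrev this
  | cons i w' => rw [sigRev_zero_cons, mul_zero]

omit hP hXc hXd in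
lemma drop_length_sub_one {α : Type*} (w : Word α) (hw : w ≠ []) :
    w.drop (w.length - 1) = [w.getLast hw] := by
  conv_lhs => rw [← List.dropLast_append_getLast hw]
  simp

omit hP hXc hXd in
lemma DS_snoc_rev (w' : Word (Fin d)) (a : Fin d) :
    DS X ((w' ++ [a]).reverse) = fun s => sigRev X w'.reverse s * deriv (fun u => X u a) s := by
  rw [show (w' ++ [a]).reverse = a :: w'.reverse by simp]
  rfl

/-- Word-level halfshuffle integral identity. -/
lemma rshw_integral (v w : Word (Fin d)) (hw : w ≠ []) {t : ℝ} (ht : t ∈ Icc 0 T) :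
    ∫ s in (0:ℝ)..t, sigRev X v.reverse s * DS X w.reverse s
      = pairF (fun z => sigRev X z.reverse t) (rshw v w) := by
  obtain ⟨w', a, hwa⟩ : ∃ w' a, w = w' ++ [a] :=
    ⟨w.dropLast, w.getLast hw, (List.dropLast_append_getLast hw).symm⟩
  subst hwa
  have hane : w' ++ [a] ≠ [] := hw
  rw [DS_snoc_rev]
  have h0T : (0:ℝ) ∈ Icc 0 T := ⟨le_rfl, hP.hT.le⟩
  have htT : t ∈ Icc 0 T := ht
  -- pointwise rewrite of the integrand on [0, t]
  have hcong : ∫ s in (0:ℝ)..t, sigRev X v.reverse s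
        * (sigRev X w'.reverse s * deriv (fun u => X u a) s)
      = ∫ s in (0:ℝ)..t, ((shuffles v.reverse w'.reverse).map
          (fun z => sigRev X z s * deriv (fun u => X u a) s)).sum := by
    refine integral_congr ?_
    intro s hs
    rw [Set.uIcc_of_le ht.1] at hs
    have hsT : s ∈ Icc 0 T := ⟨hs.1, hs.2.trans ht.2⟩
    have hsh := shufId hP hXc hXd (v.reverse.length + w'.reverse.length)
      v.reverse w'.reverse le_rfl s hsT
    dsimp only
    rw [← mul_assoc, hsh,
      show ((shuffles v.reverse w'.reverse).map
        (fun z => sigRev X z s * deriv (fun u => X u a) s)).sum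
        = msum (fun z => sigRev X z s * deriv (fun u => X u a) s) v.reverse w'.reverse from rfl,
      msum_mul_right]
  rw [hcong, list_integral _ _
    (fun z _ => ii_sig_mul_deriv hP hXc hXd z a h0T htT)]
  -- now a list sum over shuffles v.reverse w'.reverse
  have e1 : ((shuffles v.reverse w'.reverse).map
      (fun z => ∫ s in (0:ℝ)..t, sigRev X z s * deriv (fun u => X u a) s)).sum
      = msum (fun z => sigRev X (a :: z) t) v.reverse w'.reverse := rfl
  rw [e1, ← msum_rev (v.length + w'.length) v w' le_rfl (fun z => sigRev X (a :: z) t)]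
  rw [pairF_rshw, drop_length_sub_one _ hane,
    show (w' ++ [a]).getLast hane = a by simp,
    show (w' ++ [a]).dropLast = w' by simp]
  exact msum_congr (fun z => by simp) v w' 

lemma rsh_integral (x y : TA (Fin d)) (hy : y [] = 0) {t : ℝ} (ht : t ∈ Icc 0 T) :
    ∫ s in (0:ℝ)..t, PFn X x s * DFn X y s
      = pairF (fun z => sigRev X z.reverse t) (rsh x y) := by
  have h0T : (0:ℝ) ∈ Icc 0 T := ⟨le_rfl, hP.hT.le⟩
  have hii : ∀ (u w : Word (Fin d)), IntervalIntegrable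
      (fun s => sigRev X u.reverse s * DS X w.reverse s) volume 0 t :=
    fun u w => Prt.Pc.intervalIntegrable hP
      (Prt.Pc.contMul hP (Prt.Adm.cont hP (adm_sigRev hP hXc hXd u.reverse))
        (pc_DS hP hXc hXd w.reverse)) h0T ht
  have hiic : ∀ (u w : Word (Fin d)) (c : ℝ), IntervalIntegrable
      (fun s => c * (sigRev X u.reverse s * DS X w.reverse s)) volume 0 t :=
    fun u w c => (hii u w).const_mul c
  have hexp : (fun s => PFn X x s * DFn X y s) = fun s => ∑ u ∈ x.support, ∑ w ∈ y.support,
      (x u * y w) * (sigRev X u.reverse s * DS X w.reverse s) := by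
    funext s
    rw [PFn_eq]
    show (∑ u ∈ x.support, x u * sigRev X u.reverse s) * (∑ w ∈ y.support,
      y w * DS X w.reverse s) = _
    rw [Finset.sum_mul_sum]
    exact Finset.sum_congr rfl fun u hu => Finset.sum_congr rfl fun w hw => by ring
  rw [hexp]
  rw [integral_finset_sum (μ := volume) (fun (u : Word (Fin d)) (_ : u ∈ x.support) =>
    finset_ii y.support _ (fun w _ => hiic u w (x u * y w)))]
  rw [pairF_rsh]
  refine Finset.sum_congr rfl fun u hu => ?_
  rw [integral_finset_sum (μ := volume) (fun (w : Word (Fin d)) (_ : w ∈ y.support) =>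
    hiic u w (x u * y w))]
  refine Finset.sum_congr rfl fun w hw => ?_
  rw [intervalIntegral.integral_const_mul]
  have hwne : w ≠ [] := fun h => (Finsupp.mem_support_iff.1 hw) (h ▸ hy)
  rw [rshw_integral hP hXc hXd u w hwne ht]

lemma pairF_sh_eval (x y : TA (Fin d)) {s : ℝ} (hs : s ∈ Icc 0 T) :
    pairF (fun z => sigRev X z.reverse s) (sh x y)
      = pairF (fun z => sigRev X z.reverse s) x * pairF (fun z => sigRev X z.reverse s) y := by
  rw [pairF_sh, pairF_support_sum, pairF_support_sum, Finset.sum_mul_sum]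
  refine Finset.sum_congr rfl fun u hu => Finset.sum_congr rfl fun v hv => ?_
  have h1 : msum (fun z => sigRev X z.reverse s) u v
      = sigRev X u.reverse s * sigRev X v.reverse s := by
    rw [msum_rev (u.length + v.length) u v le_rfl (fun z => sigRev X z s)]
    exact (shufId hP hXc hXd (u.reverse.length + v.reverse.length)
      u.reverse v.reverse le_rfl s hs).symm
  rw [h1]
  ring

lemma sigRev_single_letter (j : Fin d) {s : ℝ} (hs : s ∈ Icc 0 T) :
    sigRev X [j] s = X s j - X 0 j := by
  rw [show sigRev X [j] s
    = ∫ r in (0:ℝ)..s, sigRev X [] r * deriv (fun u => X u j) r from rfl]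
  have h1 : ∫ r in (0:ℝ)..s, sigRev X [] r * deriv (fun u => X u j) r
      = ∫ r in (0:ℝ)..s, deriv (fun u => X u j) r :=
    integral_congr (fun r _ => one_mul _)
  have h2 := Prt.Adm.ftc hP (admX hP hXc hXd j) s hs
  rw [h1, h2]
  ring

lemma eval_eq_PFn (Φ : MvPolynomial (Fin d) ℝ → TA (Fin d))
    (hadd : ∀ q r, Φ (q + r) = Φ q + Φ r)
    (hmul : ∀ q r, Φ (q * r) = sh (Φ q) (Φ r))
    (hC : ∀ c : ℝ, Φ (MvPolynomial.C c) = Finsupp.single [] c)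
    (hXj : ∀ j : Fin d, Φ (MvPolynomial.X j) = Finsupp.single [j] 1)
    (q : MvPolynomial (Fin d) ℝ) :
    ∀ s ∈ Icc 0 T, MvPolynomial.eval (fun i => X s i - X 0 i) q = PFn X (Φ q) s := by
  induction q using MvPolynomial.induction_on with
  | C a =>
      intro s hs
      rw [hC, MvPolynomial.eval_C]
      show _ = pairF _ (Finsupp.single [] a)
      rw [pairF_single]
      simp [sigRev]
  | add q r ihq ihr =>
      intro s hs
      rw [hadd, MvPolynomial.eval_add]
      show _ = pairF _ (Φ q + Φ r)
      rw [pairF_add, ihq s hs, ihr s hs]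
      rfl
  | mul_X q j ihq =>
      intro s hs
      rw [hmul, MvPolynomial.eval_mul, MvPolynomial.eval_X]
      show _ = pairF _ (sh (Φ q) (Φ (MvPolynomial.X j)))
      rw [pairF_sh_eval hP hXc hXd _ _ hs, hXj, pairF_single, one_mul,
        show ([j] : Word (Fin d)).reverse = [j] from rfl,
        sigRev_single_letter hP hXc hXd j hs, ihq s hs]
      rfl

variable {m : ℕ}

lemma deriv_PFn_eq {Y : ℝ → Fin m → ℝ} {B : Fin m → TA (Fin d)}
    (hY : ∀ s ∈ Icc 0 T, ∀ j, Y s j = PFn X (B j) s) (j : Fin m)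
    {k : Fin n} {x : ℝ} (hx : x ∈ Ioo (τ k.castSucc) (τ k.succ)) :
    deriv (fun u => Y u j) x = DFn X (B j) x := by
  have hev : (fun u => Y u j) =ᶠ[nhds x] PFn X (B j) :=
    Filter.eventuallyEq_of_mem (isOpen_Ioo.mem_nhds hx)
      (fun y hy => hY y (hP.ioo_subset k hy) j)
  rw [hev.deriv_eq]
  exact (Prt.Adm.hasDeriv hP (adm_PFn hP hXc hXd (B j)) k x hx).deriv

lemma master {Y : ℝ → Fin m → ℝ} {B : Fin m → TA (Fin d)} (hB : ∀ j, B j [] = 0)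
    (hY : ∀ s ∈ Icc 0 T, ∀ j, Y s j = PFn X (B j) s) :
    ∀ u : Word (Fin m), ∀ t ∈ Icc 0 T,
      sigRev Y u t = pairF (fun z => sigRev X z.reverse t) (lamRev B u) := by
  intro u
  induction u with
  | nil =>
      intro t ht
      rw [show lamRev B [] = Finsupp.single [] 1 from rfl, pairF_single]
      simp [sigRev]
  | cons i w ih =>
      intro t ht
      rw [lamRev_cons]
      rw [show sigRev Y (i :: w) t
        = ∫ s in (0:ℝ)..t, sigRev Y w s * deriv (fun u => Y u i) s from rfl]
      have hae : ∀ᵐ s, s ∈ Set.uIoc 0 t →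
          sigRev Y w s * deriv (fun u => Y u i) s
            = PFn X (lamRev B w) s * DFn X (B i) s := by
        refine hP.ae_of_pieces ?_ ht
        intro k s hs
        have hsT := hP.ioo_subset k hs
        rw [ih s hsT, deriv_PFn_eq hP hXc hXd hY i hs]
        rfl
      rw [integral_congr_ae hae]
      exact rsh_integral hP hXc hXd (lamRev B w) (B i) (hB i) ht

end SigAnalysis

/-! ### Path-level assembly -/

lemma pair_eq_pairF {α : Type*} (X : RawPath α) (x : TA α) :
    pair X x = pairF (sig X) x := (pairF_eq_pairL (sig X) x).symm

/-- Key lemma: if `Y` is, on `[0,T]`, the path of signature functionals of `X` along `B`,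
then `Y` is a path and its signature pairing factors through `Λ_B`. -/
lemma key {d m : ℕ} (X : RawPath (Fin d)) (hX : IsPath X) (B : Fin m → TA (Fin d))
    (hB : ∀ j, B j [] = 0) (Y : RawPath (Fin m)) (hYT : Y.T = X.T)
    (hY : ∀ s ∈ Icc 0 X.T, ∀ j, Y.toFun s j = pairF (sigUpTo X s) (B j)) :
    IsPath Y ∧ ∀ x : TA (Fin m), pair Y x = pair X (Lam B x) := by
  obtain ⟨hT, hXc, n, τ, hmono, h0, hL, hXd⟩ := hX
  have hP : Prt X.T n τ := ⟨hT, hmono, h0, hL⟩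
  have hY' : ∀ s ∈ Icc 0 X.T, ∀ j, Y.toFun s j = PFn X.toFun (B j) s := hY
  constructor
  · refine ⟨hYT ▸ hT, ?_, n, τ, hmono, h0, hYT ▸ hL, ?_⟩
    · intro j
      have hadm := adm_PFn hP hXc hXd (B j)
      have hco := (Prt.Adm.cont hP hadm).congr (fun s hs => hY' s hs j)
      rw [hYT]
      exact hco
    · intro k j
      have hadm := adm_PFn hP hXc hXd (B j)
      have hcd := Prt.Adm.contDiffOn hP hadm k
      exact hcd.congr (fun s hs => hY' s (hP.piece_subset k hs) j)
  · intro x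
    have hsig : ∀ w : Word (Fin m), sig Y w = pairF (sig X) (lamW B w) := by
      intro w
      show sigRev Y.toFun w.reverse Y.T = _
      rw [hYT]
      exact master hP hXc hXd hB hY' w.reverse X.T ⟨hT.le, le_rfl⟩
    rw [pair_eq_pairF, pair_eq_pairF, pairF_support_sum, pairF_Lam]
    exact Finset.sum_congr rfl fun w _ => by rw [hsig w]

lemma phi_nil {d : ℕ} (Φ : MvPolynomial (Fin d) ℝ → TA (Fin d))
    (hadd : ∀ q r, Φ (q + r) = Φ q + Φ r)
    (hmul : ∀ q r, Φ (q * r) = sh (Φ q) (Φ r))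
    (hC : ∀ c : ℝ, Φ (MvPolynomial.C c) = Finsupp.single [] c)
    (hXj : ∀ j : Fin d, Φ (MvPolynomial.X j) = Finsupp.single [j] 1)
    (q : MvPolynomial (Fin d) ℝ) :
    Φ q [] = MvPolynomial.eval (fun _ => (0:ℝ)) q := by
  induction q using MvPolynomial.induction_on with
  | C a => rw [hC]; simp
  | add q r ihq ihr => rw [hadd]; simp [ihq, ihr]
  | mul_X q j ihq =>
      rw [hmul, sh_apply_nil, hXj]
      simp [ihq, Finsupp.single_apply]


/-- (1) For a polynomial map `p : ℝ^d → ℝ^t` with `p(0) = 0` and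
`W ⊆ T(ℝ^t)`, the paths `X` with `(t ↦ p(X_t − X₀)) ∈ 𝒱(W)` form `𝒱(M_p W)` where
`M_p = Λ_{φ∘p}`.  (2) For linear `B : ℝ^t → T^{≥1}(ℝ^d)`, the paths `X` with
`Λ_B^* X ∈ 𝒱(W)` form `𝒱(Λ_B W)`. -/
theorem statement12 {d t : ℕ} (W : Set (TA (Fin t))) :
    (∀ p : Fin t → MvPolynomial (Fin d) ℝ,
      (∀ j, MvPolynomial.eval (fun _ => (0 : ℝ)) (p j) = 0) →
      ∀ Φ : MvPolynomial (Fin d) ℝ → TA (Fin d),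
        (∀ q r, Φ (q + r) = Φ q + Φ r) →
        (∀ q r, Φ (q * r) = sh (Φ q) (Φ r)) →
        (∀ c : ℝ, Φ (MvPolynomial.C c) = Finsupp.single [] c) →
        (∀ j : Fin d, Φ (MvPolynomial.X j) = Finsupp.single [j] 1) →
        {X : RawPath (Fin d) | IsPath X ∧
            (⟨X.T, fun s j => MvPolynomial.eval (fun i => X.toFun s i - X.toFun 0 i) (p j)⟩ :
              RawPath (Fin t)) ∈ V W} =
          V ((Lam fun j => Φ (p j)) '' W)) ∧
    (∀ B : Fin t → TA (Fin d), (∀ j, (B j) [] = 0) →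
      {X : RawPath (Fin d) | IsPath X ∧
          (⟨X.T, fun s j => pairF (sigUpTo X s) (B j)⟩ : RawPath (Fin t)) ∈ V W} =
        V ((Lam B) '' W)) := by
  have main : ∀ (B : Fin t → TA (Fin d)) (_ : ∀ j, (B j) [] = 0) (X : RawPath (Fin d))
      (Y : RawPath (Fin t)) (_ : Y.T = X.T)
      (_ : IsPath X → ∀ s ∈ Icc 0 X.T, ∀ j, Y.toFun s j = pairF (sigUpTo X s) (B j)),
      (IsPath X ∧ Y ∈ V W) ↔ X ∈ V (Lam B '' W) := by
    intro B hB X Y hYT hY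
    constructor
    · rintro ⟨hX, hYmem⟩
      obtain ⟨hYpath, hYW⟩ := hYmem
      obtain ⟨hYk1, hYk2⟩ := key X hX B hB Y hYT (hY hX)
      refine ⟨hX, ?_⟩
      rintro y ⟨x, hxW, rfl⟩
      rw [← hYk2 x]
      exact hYW x hxW
    · rintro ⟨hX, hV⟩
      obtain ⟨hYk1, hYk2⟩ := key X hX B hB Y hYT (hY hX)
      refine ⟨hX, hYk1, fun x hx => ?_⟩
      rw [hYk2 x]
      exact hV (Lam B x) ⟨x, hx, rfl⟩
  constructor
  · intro p hp Φ hadd hmul hC hXj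
    have hB : ∀ j, (Φ (p j)) [] = 0 :=
      fun j => (phi_nil Φ hadd hmul hC hXj (p j)).trans (hp j)
    ext X
    simp only [Set.mem_setOf_eq]
    refine main (fun j => Φ (p j)) hB X
      ⟨X.T, fun s j => MvPolynomial.eval (fun i => X.toFun s i - X.toFun 0 i) (p j)⟩ rfl ?_
    intro hX s hs j
    obtain ⟨hT, hXc, n, τ, hmono, h0, hL, hXd⟩ := hX
    have hP : Prt X.T n τ := ⟨hT, hmono, h0, hL⟩
    exact eval_eq_PFn hP hXc hXd Φ hadd hmul hC hXj (p j) s hs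
  · intro B hB
    ext X
    simp only [Set.mem_setOf_eq]
    exact main B hB X ⟨X.T, fun s j => pairF (sigUpTo X s) (B j)⟩ rfl (fun _ _ _ _ => rfl)


end PathVarieties
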